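/- For every odd integer ℓ ≥ 7, the hypercube Q_n (for n large enough) contains a cycle of length 2ℓ all of whose vertices lie in layers 2 and 3 (i.e., vertices are 2-element and 3-element subsets of [n]), such that the 3-element vertices of the cycle, viewed as a 3-uniform hypergraph, form a 3-partite 3-graph. -/

import Mathlib

/-- The hypercube graph `Q_n`: vertices are subsets of `[n]`, with edges between `A ⊆ B`
with `|B| = |A| + 1`. -/
def Qgraph (n : ℕ) : SimpleGraph (Finset (Fin n)) where
  Adj A B := (A ⊆ B ∧ B.card = A.card + 1) ∨ (B ⊆ A ∧ A.card = B.card + 1)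
  symm := by constructor; intro A B h; tauto
  loopless := by constructor; intro A h; rcases h with ⟨_, h⟩ | ⟨_, h⟩ <;> omega

/-- For every odd `ℓ ≥ 7` and `n` large enough, `Q_n` contains a cycle of length `2ℓ` all
of whose vertices lie in layers 2 and 3, such that its 3-element vertices form the edge set
of a 3-partite 3-uniform hypergraph. -/
lemma walk_of_fn {V : Type*} (G : SimpleGraph V) (f : ℕ → V) :
    ∀ m : ℕ, (∀ i, i < m → G.Adj (f i) (f (i+1))) →
    ∃ p : G.Walk (f 0) (f m), p.length = m ∧ p.support = (List.range (m+1)).map f ∧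
      p.edges = (List.range m).map (fun i => s(f i, f (i+1))) := by
  intro m
  induction m with
  | zero => intro _; exact ⟨.nil, by simp [List.range_succ]⟩
  | succ m ih =>
    intro h
    obtain ⟨p, hlen, hsup, hed⟩ := ih (fun i hi => h i (by omega))
    refine ⟨p.concat (h m (by omega)), by simp [hlen], ?_, ?_⟩
    · rw [SimpleGraph.Walk.support_concat, hsup]
      simp [List.range_succ]
    · rw [SimpleGraph.Walk.edges_concat, hed]
      simp [List.range_succ]

lemma exists_cycle_of_fn {V : Type*} (G : SimpleGraph V) (f : ℕ → V) (m : ℕ) (hm : 3 ≤ m)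
    (hf : f m = f 0)
    (hinj : ∀ i j, i < m → j < m → f i = f j → i = j)
    (hadj : ∀ i, i < m → G.Adj (f i) (f (i+1))) :
    ∃ p : G.Walk (f 0) (f 0), p.IsCycle ∧ p.length = m ∧
      ∀ u ∈ p.support, ∃ i, i ≤ m ∧ u = f i := by
  obtain ⟨p, hlen, hsup, hed⟩ := walk_of_fn G f m hadj
  refine ⟨p.copy rfl hf, ⟨⟨⟨?_⟩, ?_⟩, ?_⟩, by simp [hlen], ?_⟩
  · -- edges nodup
    rw [SimpleGraph.Walk.edges_copy, hed]
    refine (List.nodup_range : (List.range m).Nodup).map_on ?_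
    intro i hi j hj hij
    simp only [List.mem_range] at hi hj
    rw [Sym2.eq_iff] at hij
    rcases hij with ⟨h1, h2⟩ | ⟨h1, h2⟩
    · exact hinj i j hi hj h1
    · rcases Nat.lt_or_ge (i+1) m with hi1 | hi1
      · rcases Nat.lt_or_ge (j+1) m with hj1 | hj1
        · have e1 := hinj i (j+1) hi hj1 h1
          have e2 := hinj (i+1) j hi1 hj h2
          omega
        · have hjm : j + 1 = m := by omega
          have hfi : f i = f 0 := by rw [h1, hjm, hf]
          have hi0 : i = 0 := hinj i 0 hi (by omega) hfi
          have := hinj (i+1) j hi1 hj h2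
          omega
      · have him : i + 1 = m := by omega
        have hfj : f 0 = f j := by rw [← hf, ← him, h2]
        have hj0 : j = 0 := (hinj 0 j (by omega) hj hfj).symm
        have := hinj i (j+1) hi (by omega) h1
        omega
  · -- ne nil
    intro hnil
    have h0 : (p.copy rfl hf).length = 0 := by rw [hnil]; rfl
    simp [hlen] at h0; omega
  · -- support tail nodup
    rw [SimpleGraph.Walk.support_copy, hsup, List.range_succ_eq_map]
    simp only [List.map_cons, List.tail_cons, List.map_map]
    refine (List.nodup_range : (List.range m).Nodup).map_on ?_
    intro i hi j hj hij
    simp only [List.mem_range] at hi hj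
    simp only [Function.comp, Nat.succ_eq_add_one] at hij
    rcases Nat.lt_or_ge (i+1) m with hi1 | hi1 <;> rcases Nat.lt_or_ge (j+1) m with hj1 | hj1
    · have := hinj _ _ hi1 hj1 hij; omega
    · have hjm : j+1 = m := by omega
      have hfi : f (i+1) = f 0 := by rw [hij, hjm, hf]
      have := hinj _ _ hi1 (by omega) hfi; omega
    · have him : i+1 = m := by omega
      have hfj : f (j+1) = f 0 := by rw [← hij, him, hf]
      have := hinj _ _ hj1 (by omega) hfj; omega
    · omega
  · intro u hu
    rw [SimpleGraph.Walk.support_copy, hsup] at hu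
    simp only [List.mem_map, List.mem_range] at hu
    obtain ⟨i, hi, rfl⟩ := hu
    exact ⟨i, by omega, rfl⟩


/-- x-index of the `j`-th 3-set in the cycle construction. -/
def cycXi (a j : ℕ) : ℕ :=
  if j < 2*a then (if j % 2 = 0 then j/2 else j/2+1)
  else if j = 2*a then a else if j = 2*a+1 then a else 0

/-- y-index of the `j`-th 3-set. -/
def cycYi (a j : ℕ) : ℕ := if j < 2*a then a+1+j/2 else a+1

/-- z-index of the `j`-th 3-set. -/
def cycZi (a j : ℕ) : ℕ :=
  if j ≤ 2*a then 2*a+1 else if j ≤ 2*a+2 then 2*a+2 else 2*a+1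

/-- first index of the `j`-th 2-set. -/
def cycS1 (a j : ℕ) : ℕ :=
  if j < 2*a then (if j % 2 = 0 then a+1+j/2 else j/2+1)
  else if j = 2*a then a else if j = 2*a+1 then a+1 else 0

/-- second index of the `j`-th 2-set. -/
def cycS2 (a j : ℕ) : ℕ :=
  if j < 2*a then 2*a+1 else if j = 2*a then a+1 else if j = 2*a+1 then 2*a+2 else a+1

lemma cyc_bounds (a j : ℕ) (ha : 2 ≤ a) :
    cycXi a j ≤ a ∧ a+1 ≤ cycYi a j ∧ cycYi a j ≤ 2*a ∧ 2*a+1 ≤ cycZi a j ∧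
      cycZi a j ≤ 2*a+2 := by
  unfold cycXi cycYi cycZi; split_ifs <;> omega

lemma cycS_bounds (a j : ℕ) (ha : 2 ≤ a) :
    cycS1 a j ≤ 2*a+2 ∧ cycS2 a j ≤ 2*a+2 ∧ cycS1 a j ≠ cycS2 a j := by
  unfold cycS1 cycS2; split_ifs <;> omega

lemma cyc_sub1 (a j : ℕ) :
    (cycS1 a j = cycXi a j ∨ cycS1 a j = cycYi a j ∨ cycS1 a j = cycZi a j) ∧
    (cycS2 a j = cycXi a j ∨ cycS2 a j = cycYi a j ∨ cycS2 a j = cycZi a j) := by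
  unfold cycS1 cycS2 cycXi cycYi cycZi; split_ifs <;> omega

lemma cyc_sub2 (a j : ℕ) (hj : j < 2*a+3) :
    (cycS1 a j = cycXi a (j+1) ∨ cycS1 a j = cycYi a (j+1) ∨ cycS1 a j = cycZi a (j+1)) ∧
    (cycS2 a j = cycXi a (j+1) ∨ cycS2 a j = cycYi a (j+1) ∨ cycS2 a j = cycZi a (j+1)) := by
  unfold cycS1 cycS2 cycXi cycYi cycZi; split_ifs <;> omega

lemma cycT_inj (a j k : ℕ) (ha : 2 ≤ a) (hj : j < 2*a+3) (hk : k < 2*a+3)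
    (h1 : cycXi a j = cycXi a k) (h2 : cycYi a j = cycYi a k)
    (h3 : cycZi a j = cycZi a k) : j = k := by
  unfold cycXi at h1; unfold cycYi at h2; unfold cycZi at h3
  split_ifs at h1 h2 h3 <;> (try simp only [false_or, or_false] at h1 h2 h3) <;> omega

lemma cycS_inj (a j k : ℕ) (ha : 2 ≤ a) (hj : j < 2*a+3) (hk : k < 2*a+3)
    (h1 : cycS1 a j = cycS1 a k ∨ cycS1 a j = cycS2 a k)
    (h2 : cycS2 a j = cycS1 a k ∨ cycS2 a j = cycS2 a k) : j = k := by
  unfold cycS1 cycS2 at h1 h2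
  split_ifs at h1 h2 <;> (try simp only [false_or, or_false] at h1 h2) <;> omega

lemma cycT_cyclic (a : ℕ) (ha : 2 ≤ a) :
    cycXi a (2*a+3) = cycXi a 0 ∧ cycYi a (2*a+3) = cycYi a 0 ∧
      cycZi a (2*a+3) = cycZi a 0 := by
  unfold cycXi cycYi cycZi; split_ifs <;> omega


set_option maxHeartbeats 1000000 in
theorem cycle_in_layers_two_three (ℓ : ℕ) (hℓ : 7 ≤ ℓ) (hodd : Odd ℓ) :
    ∃ n₀ : ℕ, ∀ n ≥ n₀, ∃ (v : Finset (Fin n)) (p : (Qgraph n).Walk v v),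
      p.IsCycle ∧ p.length = 2 * ℓ ∧
      (∀ u ∈ p.support, u.card = 2 ∨ u.card = 3) ∧
      ∃ P₁ P₂ P₃ : Finset (Fin n),
        Disjoint P₁ P₂ ∧ Disjoint P₁ P₃ ∧ Disjoint P₂ P₃ ∧
        ∀ u ∈ p.support, u.card = 3 →
          u ⊆ P₁ ∪ P₂ ∪ P₃ ∧ (u ∩ P₁).card ≤ 1 ∧ (u ∩ P₂).card ≤ 1 ∧
            (u ∩ P₃).card ≤ 1 := by
  obtain ⟨a, ha2, hℓa⟩ : ∃ a, 2 ≤ a ∧ ℓ = 2*a+3 := by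
    obtain ⟨c, hc⟩ := hodd; exact ⟨c - 1, by omega, by omega⟩
  subst hℓa
  refine ⟨2*a+3, fun n hn => ?_⟩
  have hn0 : 0 < n := by omega
  set X : ℕ → Fin n := fun k => ⟨k % n, Nat.mod_lt k hn0⟩ with hXdef
  have hXinj : ∀ p q, p < n → q < n → X p = X q → p = q := by
    intro p q hp hq h
    have h' : p % n = q % n := congrArg Fin.val h
    rwa [Nat.mod_eq_of_lt hp, Nat.mod_eq_of_lt hq] at h'
  set T : ℕ → Finset (Fin n) :=
    fun j => {X (cycXi a j), X (cycYi a j), X (cycZi a j)} with hTdef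
  set S : ℕ → Finset (Fin n) := fun j => {X (cycS1 a j), X (cycS2 a j)} with hSdef
  set f : ℕ → Finset (Fin n) :=
    fun k => if k % 2 = 0 then T (k/2) else S (k/2) with hfdef
  have hfeven : ∀ k, k % 2 = 0 → f k = T (k/2) := by
    intro k hk; simp [hfdef, hk]
  have hfodd : ∀ k, k % 2 = 1 → f k = S (k/2) := by
    intro k hk; simp [hfdef, hk]
  -- cardinalities
  have hT3 : ∀ j, (T j).card = 3 := by
    intro j
    have hb := cyc_bounds a j ha2
    rw [hTdef, Finset.card_eq_three]
    exact ⟨_, _, _,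
      fun h => by have := hXinj _ _ (by omega) (by omega) h; omega,
      fun h => by have := hXinj _ _ (by omega) (by omega) h; omega,
      fun h => by have := hXinj _ _ (by omega) (by omega) h; omega, rfl⟩
  have hS2 : ∀ j, (S j).card = 2 := by
    intro j
    have hb := cycS_bounds a j ha2
    rw [hSdef, Finset.card_eq_two]
    exact ⟨_, _, fun h => by have := hXinj _ _ (by omega) (by omega) h; omega, rfl⟩
  -- injectivity of T and S
  have hTinjF : ∀ j k, j < 2*a+3 → k < 2*a+3 → T j = T k → j = k := by
    intro j k hj hk h
    have hbj := cyc_bounds a j ha2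
    have hbk := cyc_bounds a k ha2
    have m1 : X (cycXi a j) ∈ T k := by rw [← h, hTdef]; simp
    have m2 : X (cycYi a j) ∈ T k := by rw [← h, hTdef]; simp
    have m3 : X (cycZi a j) ∈ T k := by rw [← h, hTdef]; simp
    simp only [hTdef, Finset.mem_insert, Finset.mem_singleton] at m1 m2 m3
    have e1 : cycXi a j = cycXi a k := by
      rcases m1 with h'|h'|h' <;> (have := hXinj _ _ (by omega) (by omega) h'; omega)
    have e2 : cycYi a j = cycYi a k := by
      rcases m2 with h'|h'|h' <;> (have := hXinj _ _ (by omega) (by omega) h'; omega)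
    have e3 : cycZi a j = cycZi a k := by
      rcases m3 with h'|h'|h' <;> (have := hXinj _ _ (by omega) (by omega) h'; omega)
    exact cycT_inj a j k ha2 hj hk e1 e2 e3
  have hSinjF : ∀ j k, j < 2*a+3 → k < 2*a+3 → S j = S k → j = k := by
    intro j k hj hk h
    have hbj := cycS_bounds a j ha2
    have hbk := cycS_bounds a k ha2
    have m1 : X (cycS1 a j) ∈ S k := by rw [← h, hSdef]; simp
    have m2 : X (cycS2 a j) ∈ S k := by rw [← h, hSdef]; simp
    simp only [hSdef, Finset.mem_insert, Finset.mem_singleton] at m1 m2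
    refine cycS_inj a j k ha2 hj hk ?_ ?_
    · rcases m1 with h'|h'
      · exact Or.inl (hXinj _ _ (by omega) (by omega) h')
      · exact Or.inr (hXinj _ _ (by omega) (by omega) h')
    · rcases m2 with h'|h'
      · exact Or.inl (hXinj _ _ (by omega) (by omega) h')
      · exact Or.inr (hXinj _ _ (by omega) (by omega) h')
  -- f is cyclic
  have hf0 : f (2*(2*a+3)) = f 0 := by
    have e1 : f (2*(2*a+3)) = T (2*a+3) := by
      rw [hfeven _ (by omega)]; congr 1; omega
    have e2 : f 0 = T 0 := hfeven 0 rfl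
    obtain ⟨c1, c2, c3⟩ := cycT_cyclic a ha2
    have e3 : T (2*a+3) = T 0 := by
      simp only [hTdef]; rw [c1, c2, c3]
    rw [e1, e2, e3]
  -- f is injective on [0, 2ℓ)
  have hfinj : ∀ i j, i < 2*(2*a+3) → j < 2*(2*a+3) → f i = f j → i = j := by
    intro i j hi hj h
    rcases Nat.mod_two_eq_zero_or_one i with hi2 | hi2 <;>
      rcases Nat.mod_two_eq_zero_or_one j with hj2 | hj2
    · rw [hfeven i hi2, hfeven j hj2] at h
      have := hTinjF (i/2) (j/2) (by omega) (by omega) h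
      omega
    · rw [hfeven i hi2, hfodd j hj2] at h
      have h3 := hT3 (i/2); rw [h, hS2] at h3; omega
    · rw [hfodd i hi2, hfeven j hj2] at h
      have h3 := hT3 (j/2); rw [← h, hS2] at h3; omega
    · rw [hfodd i hi2, hfodd j hj2] at h
      have := hSinjF (i/2) (j/2) (by omega) (by omega) h
      omega
  -- adjacency
  have hadj : ∀ i, i < 2*(2*a+3) → (Qgraph n).Adj (f i) (f (i+1)) := by
    intro i hi
    rcases Nat.mod_two_eq_zero_or_one i with h2 | h2
    · have e1 : f i = T (i/2) := hfeven i h2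
      have e2 : f (i+1) = S (i/2) := by
        rw [hfodd (i+1) (by omega)]; congr 1; omega
      rw [e1, e2]
      refine Or.inr ⟨?_, by rw [hT3, hS2]⟩
      intro x hx
      have hs := cyc_sub1 a (i/2)
      simp only [hSdef, Finset.mem_insert, Finset.mem_singleton] at hx
      simp only [hTdef, Finset.mem_insert, Finset.mem_singleton]
      rcases hx with rfl | rfl
      · rcases hs.1 with h'|h'|h' <;> rw [h']
        · exact Or.inl rfl
        · exact Or.inr (Or.inl rfl)
        · exact Or.inr (Or.inr rfl)
      · rcases hs.2 with h'|h'|h' <;> rw [h']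
        · exact Or.inl rfl
        · exact Or.inr (Or.inl rfl)
        · exact Or.inr (Or.inr rfl)
    · have e1 : f i = S (i/2) := hfodd i h2
      have e2 : f (i+1) = T (i/2+1) := by
        rw [hfeven (i+1) (by omega)]; congr 1; omega
      rw [e1, e2]
      refine Or.inl ⟨?_, by rw [hT3, hS2]⟩
      intro x hx
      have hs := cyc_sub2 a (i/2) (by omega)
      simp only [hSdef, Finset.mem_insert, Finset.mem_singleton] at hx
      simp only [hTdef, Finset.mem_insert, Finset.mem_singleton]
      rcases hx with rfl | rfl
      · rcases hs.1 with h'|h'|h' <;> rw [h']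
        · exact Or.inl rfl
        · exact Or.inr (Or.inl rfl)
        · exact Or.inr (Or.inr rfl)
      · rcases hs.2 with h'|h'|h' <;> rw [h']
        · exact Or.inl rfl
        · exact Or.inr (Or.inl rfl)
        · exact Or.inr (Or.inr rfl)
  obtain ⟨p, hcyc, hplen, hpsup⟩ :=
    exists_cycle_of_fn (Qgraph n) f (2*(2*a+3)) (by omega) hf0 hfinj hadj
  refine ⟨f 0, p, hcyc, by omega, ?_, ?_⟩
  · intro u hu
    obtain ⟨i, hi, rfl⟩ := hpsup u hu
    rcases Nat.mod_two_eq_zero_or_one i with h2 | h2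
    · right; rw [hfeven i h2]; exact hT3 _
    · left; rw [hfodd i h2]; exact hS2 _
  · refine ⟨(Finset.range (a+1)).image X, (Finset.Icc (a+1) (2*a)).image X,
      (Finset.Icc (2*a+1) (2*a+2)).image X, ?_, ?_, ?_, ?_⟩
    · rw [Finset.disjoint_left]
      intro x hx1 hx2
      simp only [Finset.mem_image, Finset.mem_range, Finset.mem_Icc] at hx1 hx2
      obtain ⟨p, hp, rfl⟩ := hx1
      obtain ⟨q, hq, hq'⟩ := hx2
      have := hXinj _ _ (by omega) (by omega) hq'
      omega
    · rw [Finset.disjoint_left]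
      intro x hx1 hx2
      simp only [Finset.mem_image, Finset.mem_range, Finset.mem_Icc] at hx1 hx2
      obtain ⟨p, hp, rfl⟩ := hx1
      obtain ⟨q, hq, hq'⟩ := hx2
      have := hXinj _ _ (by omega) (by omega) hq'
      omega
    · rw [Finset.disjoint_left]
      intro x hx1 hx2
      simp only [Finset.mem_image, Finset.mem_Icc] at hx1 hx2
      obtain ⟨p, hp, rfl⟩ := hx1
      obtain ⟨q, hq, hq'⟩ := hx2
      have := hXinj _ _ (by omega) (by omega) hq'
      omega
    · intro u hu hcard
      obtain ⟨i, hi, rfl⟩ := hpsup u hu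
      rcases Nat.mod_two_eq_zero_or_one i with h2 | h2
      swap
      · rw [hfodd i h2, hS2] at hcard; omega
      rw [hfeven i h2] at hcard ⊢
      set j := i/2 with hj
      have hb := cyc_bounds a j ha2
      constructor
      · intro x hx
        simp only [hTdef, Finset.mem_insert, Finset.mem_singleton] at hx
        simp only [Finset.mem_union, Finset.mem_image, Finset.mem_range, Finset.mem_Icc]
        rcases hx with rfl | rfl | rfl
        · exact Or.inl (Or.inl ⟨cycXi a j, by omega, rfl⟩)
        · exact Or.inl (Or.inr ⟨cycYi a j, by omega, rfl⟩)
        · exact Or.inr ⟨cycZi a j, by omega, rfl⟩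
      have key : ∀ (P : Finset (Fin n)) (w : ℕ),
          (∀ x ∈ T j ∩ P, x = X w) → (T j ∩ P).card ≤ 1 := by
        intro P w hw
        exact Finset.card_le_one.mpr fun x hx y hy => by rw [hw x hx, hw y hy]
      refine ⟨key _ (cycXi a j) ?_, key _ (cycYi a j) ?_, key _ (cycZi a j) ?_⟩
      · intro x hx
        rw [Finset.mem_inter] at hx
        obtain ⟨hxu, hxp⟩ := hx
        simp only [Finset.mem_image, Finset.mem_range] at hxp
        obtain ⟨q, hq, rfl⟩ := hxp
        simp only [hTdef, Finset.mem_insert, Finset.mem_singleton] at hxu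
        rcases hxu with h'|h'|h'
        · exact h'
        · exact absurd (hXinj _ _ (by omega) (by omega) h') (by omega)
        · exact absurd (hXinj _ _ (by omega) (by omega) h') (by omega)
      · intro x hx
        rw [Finset.mem_inter] at hx
        obtain ⟨hxu, hxp⟩ := hx
        simp only [Finset.mem_image, Finset.mem_Icc] at hxp
        obtain ⟨q, hq, rfl⟩ := hxp
        simp only [hTdef, Finset.mem_insert, Finset.mem_singleton] at hxu
        rcases hxu with h'|h'|h'
        · exact absurd (hXinj _ _ (by omega) (by omega) h') (by omega)
        · exact h'
        · exact absurd (hXinj _ _ (by omega) (by omega) h') (by omega)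
      · intro x hx
        rw [Finset.mem_inter] at hx
        obtain ⟨hxu, hxp⟩ := hx
        simp only [Finset.mem_image, Finset.mem_Icc] at hxp
        obtain ⟨q, hq, rfl⟩ := hxp
        simp only [hTdef, Finset.mem_insert, Finset.mem_singleton] at hxu
        rcases hxu with h'|h'|h'
        · exact absurd (hXinj _ _ (by omega) (by omega) h') (by omega)
        · exact absurd (hXinj _ _ (by omega) (by omega) h') (by omega)
        · exact h'
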